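/- Let A ∈ ℝ^{m×n} have rows a_1,…,a_m and let λ > 0. Then the online λ-ridge leverage scores l_1,…,l_m of the rows of A satisfy Σ_{i=1}^m l_i ≤ 2n·ln(1 + ‖A‖₂²/λ), where ‖A‖₂ is the spectral norm of A. -/

import Mathlib

open Matrix

/-- The online `λ`-ridge leverage score of the `i`-th row of `A`:
`min( aᵢ (∑_{j<i} aⱼᵀaⱼ + λI)⁻¹ aᵢᵀ , 1 )`. -/
noncomputable def onlineRidgeScore {m n : ℕ} (A : Matrix (Fin m) (Fin n) ℝ)
    (lam : ℝ) (i : Fin m) : ℝ :=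
  min ((A i) ⬝ᵥ
    (((∑ j : Fin m, if (j : ℕ) < (i : ℕ) then vecMulVec (A j) (A j) else 0)
        + lam • 1)⁻¹ *ᵥ (A i))) 1

/-- The squared spectral norm `‖A‖₂²` of `A`, i.e. the largest eigenvalue of `AᵀA`. -/
noncomputable def spectralNormSq {m n : ℕ} (A : Matrix (Fin m) (Fin n) ℝ) : ℝ :=
  ⨆ i, (Matrix.isHermitian_conjTranspose_mul_self A).eigenvalues i

private noncomputable def rsP {m n : ℕ} (A : Matrix (Fin m) (Fin n) ℝ) (lam : ℝ) (k : ℕ) :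
    Matrix (Fin n) (Fin n) ℝ :=
  (∑ j : Fin m, if (j : ℕ) < k then vecMulVec (A j) (A j) else 0) + lam • 1

private lemma psd_vecMulVec {n : ℕ} (v : Fin n → ℝ) : (vecMulVec v v).PosSemidef := by
  have h := posSemidef_conjTranspose_mul_self (Matrix.replicateRow Unit v)
  have he : (Matrix.replicateRow Unit v)ᴴ * Matrix.replicateRow Unit v = vecMulVec v v := by
    rw [conjTranspose_replicateRow, show star v = v from funext fun i => star_trivial _,
      ← vecMulVec_eq Unit]
  rwa [he] at h

private lemma posDef_rsP {m n : ℕ} (A : Matrix (Fin m) (Fin n) ℝ) {lam : ℝ} (hlam : 0 < lam)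
    (k : ℕ) : (rsP A lam k).PosDef := by
  apply Matrix.PosDef.posSemidef_add
  · apply Finset.sum_induction _ (fun M : Matrix (Fin n) (Fin n) ℝ => M.PosSemidef)
      (fun a b ha hb => ha.add hb) Matrix.PosSemidef.zero
    intro j _
    split_ifs
    · exact psd_vecMulVec _
    · exact Matrix.PosSemidef.zero
  · rw [Matrix.smul_one_eq_diagonal]
    exact Matrix.posDef_diagonal_iff.mpr fun _ => hlam

private lemma min_le_two_mul_log {x : ℝ} (hx : 0 ≤ x) : min x 1 ≤ 2 * Real.log (1 + x) := by
  have h1x : (0:ℝ) < 1 + x := by linarith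
  have hlog : x / (1 + x) ≤ Real.log (1 + x) := by
    have h := Real.log_le_sub_one_of_pos (x := (1 + x)⁻¹) (by positivity)
    rw [Real.log_inv] at h
    have he : x / (1 + x) = -((1 + x)⁻¹ - 1) := by field_simp; ring
    linarith [he ▸ le_refl (x / (1 + x))]
  rcases le_total x 1 with h | h
  · rw [min_eq_left h]
    have hx2 : x ≤ 2 * (x / (1 + x)) := by
      rw [mul_div_assoc', le_div_iff₀ h1x]
      nlinarith
    linarith
  · rw [min_eq_right h]
    have h2 : Real.log 2 ≤ Real.log (1 + x) := Real.log_le_log (by norm_num) (by linarith)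
    nlinarith [Real.log_two_gt_d9]

private lemma rsP_step {m n : ℕ} (A : Matrix (Fin m) (Fin n) ℝ) (lam : ℝ) (i : Fin m) :
    rsP A lam ((i : ℕ) + 1) = rsP A lam i + vecMulVec (A i) (A i) := by
  unfold rsP
  have h2 : vecMulVec (A i) (A i) = ∑ j : Fin m, if j = i then vecMulVec (A j) (A j) else 0 := by
    rw [Finset.sum_ite_eq' Finset.univ i]
    simp
  have h3 : (∑ j : Fin m, if (j : ℕ) < (i : ℕ) + 1 then vecMulVec (A j) (A j) else 0)
      = (∑ j : Fin m, if (j : ℕ) < (i : ℕ) then vecMulVec (A j) (A j) else 0)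
        + ∑ j : Fin m, if j = i then vecMulVec (A j) (A j) else 0 := by
    rw [← Finset.sum_add_distrib]
    apply Finset.sum_congr rfl
    intro j _
    by_cases hji : j = i
    · subst hji; simp
    · have hne : (j : ℕ) ≠ (i : ℕ) := fun h => hji (Fin.ext h)
      have : ((j : ℕ) < (i : ℕ) + 1) ↔ ((j : ℕ) < (i : ℕ)) := by omega
      simp [this, hji]
  rw [h3, ← h2]
  abel

private lemma rsP_last {m n : ℕ} (A : Matrix (Fin m) (Fin n) ℝ) (lam : ℝ) :
    rsP A lam m = Aᴴ * A + lam • 1 := by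
  unfold rsP
  congr 1
  have h : ∀ j : Fin m,
      (if (j : ℕ) < m then vecMulVec (A j) (A j) else 0) = vecMulVec (A j) (A j) :=
    fun j => if_pos j.is_lt
  rw [Finset.sum_congr rfl fun j _ => h j]
  ext a b
  rw [Matrix.sum_apply, Matrix.mul_apply]
  simp [vecMulVec_apply, conjTranspose_apply, mul_comm]

private lemma det_add_vecMulVec {n : ℕ} {M : Matrix (Fin n) (Fin n) ℝ} (hM : M.PosDef)
    (v : Fin n → ℝ) : (M + vecMulVec v v).det = M.det * (1 + v ⬝ᵥ (M⁻¹ *ᵥ v)) := by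
  rw [vecMulVec_eq Unit, Matrix.det_add_replicateCol_mul_replicateRow hM.det_pos.ne'.isUnit]
  congr 1
  rw [Matrix.mul_assoc, ← Matrix.replicateCol_mulVec, Matrix.det_unique, Matrix.add_apply,
    Matrix.one_apply_eq, Matrix.replicateRow_mul_replicateCol_apply]

private lemma det_reg_eq_prod {m n : ℕ} (A : Matrix (Fin m) (Fin n) ℝ) (lam : ℝ) :
    (Aᴴ * A + lam • 1).det
      = ∏ i, (lam + (Matrix.isHermitian_conjTranspose_mul_self A).eigenvalues i) := by
  set hA := Matrix.isHermitian_conjTranspose_mul_self A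
  set U : Matrix (Fin n) (Fin n) ℝ := (hA.eigenvectorUnitary : Matrix (Fin n) (Fin n) ℝ) with hUdef
  have hU : U * star U = 1 := (Matrix.mem_unitaryGroup_iff).mp (hA.eigenvectorUnitary).2
  set D : Matrix (Fin n) (Fin n) ℝ := diagonal (RCLike.ofReal ∘ hA.eigenvalues) with hDdef
  have key : Aᴴ * A + lam • 1 = U * (D + lam • 1) * star U := by
    conv_lhs => rw [hA.spectral_theorem]
    rw [Matrix.mul_add, Matrix.add_mul]
    congr 1
    rw [Matrix.mul_smul, Matrix.mul_one, Matrix.smul_mul, hU]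
  rw [key, det_mul, det_mul]
  have h1 : det U * det (star U) = 1 := by rw [← det_mul, hU, det_one]
  rw [mul_comm (det U) (det (D + lam • 1)), mul_assoc, h1, mul_one]
  rw [Matrix.smul_one_eq_diagonal, diagonal_add, det_diagonal]
  apply Finset.prod_congr rfl
  intro i _
  simp [add_comm]

/-- **Sum of online ridge leverage scores is bounded:**
`∑ lᵢ ≤ 2n·ln(1 + ‖A‖₂²/λ)`. -/
theorem sum_onlineRidgeScore_le (m n : ℕ) (lam : ℝ) (hlam : 0 < lam)
    (A : Matrix (Fin m) (Fin n) ℝ) :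
    ∑ i : Fin m, onlineRidgeScore A lam i ≤
      2 * n * Real.log (1 + spectralNormSq A / lam) := by
  classical
  rcases Nat.eq_zero_or_pos n with hn | hn
  · subst hn
    have hz : ∀ i : Fin m, onlineRidgeScore A lam i = 0 := by
      intro i
      simp [onlineRidgeScore, dotProduct]
    simp [hz]
  -- notation
  set μ := (Matrix.isHermitian_conjTranspose_mul_self A).eigenvalues with hμdef
  set S := spectralNormSq A with hSdef
  have hμS : ∀ i, μ i ≤ S := fun i =>
    le_ciSup (Set.Finite.bddAbove (Set.finite_range μ)) i
  have hμ0 : ∀ i, 0 ≤ μ i := fun i =>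
    Matrix.eigenvalues_conjTranspose_mul_self_nonneg A i
  have hS0 : 0 ≤ S := le_trans (hμ0 ⟨0, hn⟩) (hμS ⟨0, hn⟩)
  -- per-step inequality
  have hkey : ∀ i : Fin m, onlineRidgeScore A lam i ≤
      2 * (Real.log ((rsP A lam ((i : ℕ) + 1)).det) - Real.log ((rsP A lam (i : ℕ)).det)) := by
    intro i
    have hM : (rsP A lam (i : ℕ)).PosDef := posDef_rsP A hlam _
    have hx0 : 0 ≤ A i ⬝ᵥ ((rsP A lam (i : ℕ))⁻¹ *ᵥ A i) := by
      have h := hM.inv.posSemidef.dotProduct_mulVec_nonneg (A i)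
      simpa using h
    have hdet : (rsP A lam ((i : ℕ) + 1)).det
        = (rsP A lam (i : ℕ)).det * (1 + A i ⬝ᵥ ((rsP A lam (i : ℕ))⁻¹ *ᵥ A i)) := by
      rw [rsP_step, det_add_vecMulVec hM]
    have hdM : 0 < (rsP A lam (i : ℕ)).det := hM.det_pos
    have hlog : Real.log ((rsP A lam ((i : ℕ) + 1)).det)
        = Real.log ((rsP A lam (i : ℕ)).det)
          + Real.log (1 + A i ⬝ᵥ ((rsP A lam (i : ℕ))⁻¹ *ᵥ A i)) := by
      rw [hdet, Real.log_mul hdM.ne' (by linarith)]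
    have hsc : onlineRidgeScore A lam i
        = min (A i ⬝ᵥ ((rsP A lam (i : ℕ))⁻¹ *ᵥ A i)) 1 := rfl
    rw [hsc, hlog]
    have := min_le_two_mul_log hx0
    linarith
  -- telescoping
  have htel : ∑ i : Fin m, onlineRidgeScore A lam i ≤
      2 * (Real.log ((rsP A lam m).det) - Real.log ((rsP A lam 0).det)) := by
    calc ∑ i : Fin m, onlineRidgeScore A lam i
        ≤ ∑ i : Fin m, 2 * (Real.log ((rsP A lam ((i : ℕ) + 1)).det)
            - Real.log ((rsP A lam (i : ℕ)).det)) :=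
          Finset.sum_le_sum fun i _ => hkey i
      _ = ∑ k ∈ Finset.range m, 2 * (Real.log ((rsP A lam (k + 1)).det)
            - Real.log ((rsP A lam k).det)) :=
          Fin.sum_univ_eq_sum_range
            (fun k => 2 * (Real.log ((rsP A lam (k + 1)).det) - Real.log ((rsP A lam k).det))) m
      _ = 2 * ∑ k ∈ Finset.range m, (Real.log ((rsP A lam (k + 1)).det)
            - Real.log ((rsP A lam k).det)) := by
          rw [Finset.mul_sum]
      _ = 2 * (Real.log ((rsP A lam m).det) - Real.log ((rsP A lam 0).det)) := by
          rw [Finset.sum_range_sub (fun k => Real.log ((rsP A lam k).det))]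
  -- endpoints
  have h0 : Real.log ((rsP A lam 0).det) = n * Real.log lam := by
    have he : rsP A lam 0 = lam • (1 : Matrix (Fin n) (Fin n) ℝ) := by
      unfold rsP; simp
    rw [he, Matrix.det_smul, Matrix.det_one, mul_one, Fintype.card_fin, Real.log_pow]
  have hlogm : Real.log ((rsP A lam m).det) ≤ n * Real.log (lam + S) := by
    rw [rsP_last, det_reg_eq_prod A lam,
      Real.log_prod (fun i _ => by have := hμ0 i; positivity)]
    calc ∑ i, Real.log (lam + μ i)
        ≤ ∑ _i : Fin n, Real.log (lam + S) :=
          Finset.sum_le_sum fun i _ =>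
            Real.log_le_log (by have := hμ0 i; positivity) (by linarith [hμS i])
      _ = n * Real.log (lam + S) := by
          rw [Finset.sum_const, Finset.card_univ, Fintype.card_fin, nsmul_eq_mul]
  have hfin : Real.log (lam + S) - Real.log lam = Real.log (1 + S / lam) := by
    rw [← Real.log_div (by positivity) hlam.ne']
    congr 1
    field_simp
  calc ∑ i : Fin m, onlineRidgeScore A lam i
      ≤ 2 * (Real.log ((rsP A lam m).det) - Real.log ((rsP A lam 0).det)) := htel
    _ ≤ 2 * (n * Real.log (lam + S) - n * Real.log lam) := by
        rw [h0] at htel ⊢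
        nlinarith [hlogm]
    _ = 2 * n * (Real.log (lam + S) - Real.log lam) := by ring
    _ = 2 * n * Real.log (1 + S / lam) := by rw [hfin]
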